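/- arXiv:2402.15053 — 2 statements merged into one kernel-verified Lean document; each statement's English description precedes it below -/
import Mathlib

section
/- Let (X, Y) be random vectors in ℝ^d × ℝ^n with a strictly positive joint Lebesgue density π_{X,Y}, marginal densities π_X(x) = ∫ π_{X,Y}(x,y) dy and π_Y(y) = ∫ π_{X,Y}(x,y) dx, and conditional density π_{X|Y}(x|y) = π_{X,Y}(x,y)/π_Y(y), assumed continuously differentiable in y for each x. Suppose π_Y satisfies the log-Sobolev inequality with constant κ ≥ 1 and symmetric positive definite matrix Γ ∈ ℝ^{n×n}: for every continuously differentiable h: ℝ^n → ℝ with h² log h², h², and ‖∇h‖²_Γ integrable against π_Y, Ent_{π_Y}[h²] ≤ 2κ ∫ ‖∇h(y)‖²_Γ π_Y(y) dy. Assume all integrals below are finite. Then the mutual information satisfies I(X;Y) ≤ (κ/2) ∫∫ ‖∇_y log π_{X|Y}(x|y)‖²_Γ π_{X,Y}(x,y) dx dy. -/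
open MeasureTheory Matrix

/-- The entropy functional `Ent_μ[f] = ∫ f log (f / ∫ f dμ) dμ`. -/
noncomputable def entFun {α : Type*} [MeasurableSpace α] (μ : Measure α) (f : α → ℝ) : ℝ :=
  ∫ x, f x * Real.log (f x / ∫ y, f y ∂μ) ∂μ

/-- The Γ-weighted squared norm `‖v‖²_Γ = vᵀ Γ v`. -/
noncomputable def quadForm {p : ℕ} (Γ : Matrix (Fin p) (Fin p) ℝ)
    (v : EuclideanSpace ℝ (Fin p)) : ℝ :=
  (v : Fin p → ℝ) ⬝ᵥ Γ.mulVec (v : Fin p → ℝ)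

lemma quadForm_smul {p : ℕ} (Γ : Matrix (Fin p) (Fin p) ℝ) (c : ℝ)
    (v : EuclideanSpace ℝ (Fin p)) : quadForm Γ (c • v) = c ^ 2 * quadForm Γ v := by
  have hc : ∀ (w : EuclideanSpace ℝ (Fin p)) (i : Fin p),
      (c • w : EuclideanSpace ℝ (Fin p)) i = c * w i := fun _ _ => rfl
  simp only [quadForm, dotProduct, Matrix.mulVec, hc, Finset.mul_sum]
  exact Finset.sum_congr rfl fun i _ => Finset.sum_congr rfl fun j _ => by ring

lemma integral_pos_of_pos_of_integrable {k : ℕ} {f : EuclideanSpace ℝ (Fin k) → ℝ}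
    (hf : ∀ z, 0 < f z) (hi : Integrable f) : 0 < ∫ z, f z := by
  rw [integral_pos_iff_support_of_nonneg (Pi.le_def.mpr fun z => (hf z).le) hi]
  have hs : Function.support f = Set.univ := Set.eq_univ_of_forall fun z => (hf z).ne'
  rw [hs]
  exact isOpen_univ.measure_pos volume ⟨0, trivial⟩

/-- If the marginal density `π_Y` satisfies a log-Sobolev inequality with constant `κ` and
matrix `Γ`, then `I(X;Y) ≤ (κ/2) ∫∫ ‖∇_y log π_{X|Y}(x|y)‖²_Γ π_{X,Y}(x,y) dx dy`. -/
theorem mutual_information_le_of_log_sobolev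
    {d n : ℕ}
    (π : EuclideanSpace ℝ (Fin d) → EuclideanSpace ℝ (Fin n) → ℝ)
    (hπmeas : Measurable (Function.uncurry π))
    (hπpos : ∀ x y, 0 < π x y)
    (hπprob : (∫ q : EuclideanSpace ℝ (Fin d) × EuclideanSpace ℝ (Fin n), π q.1 q.2) = 1)
    (πX : EuclideanSpace ℝ (Fin d) → ℝ) (hπX : ∀ x, πX x = ∫ y, π x y)
    (πY : EuclideanSpace ℝ (Fin n) → ℝ) (hπY : ∀ y, πY y = ∫ x, π x y)
    -- `g x y` is the gradient in `y` of `log π_{X|Y}(x|y)`, assumed to exist and be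
    -- continuous in `y` for each `x`
    (g : EuclideanSpace ℝ (Fin d) → EuclideanSpace ℝ (Fin n) → EuclideanSpace ℝ (Fin n))
    (hg : ∀ x y, HasGradientAt (fun y' => Real.log (π x y' / πY y')) (g x y) y)
    (hgcont : ∀ x, Continuous (g x))
    (κ : ℝ) (hκ : 1 ≤ κ) (Γ : Matrix (Fin n) (Fin n) ℝ) (hΓ : Γ.PosDef)
    (hLSI : ∀ h : EuclideanSpace ℝ (Fin n) → ℝ, ContDiff ℝ 1 h →
      Integrable (fun y => h y ^ 2 * Real.log (h y ^ 2))
        (volume.withDensity fun y => ENNReal.ofReal (πY y)) →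
      Integrable (fun y => h y ^ 2)
        (volume.withDensity fun y => ENNReal.ofReal (πY y)) →
      Integrable (fun y => quadForm Γ (gradient h y))
        (volume.withDensity fun y => ENNReal.ofReal (πY y)) →
      entFun (volume.withDensity fun y => ENNReal.ofReal (πY y)) (fun y => h y ^ 2) ≤
        2 * κ * ∫ y, quadForm Γ (gradient h y)
          ∂(volume.withDensity fun y => ENNReal.ofReal (πY y)))
    (hMIint : Integrable (fun q : EuclideanSpace ℝ (Fin d) × EuclideanSpace ℝ (Fin n) =>
      π q.1 q.2 * Real.log (π q.1 q.2 / (πX q.1 * πY q.2))))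
    (hRHSint : Integrable (fun q : EuclideanSpace ℝ (Fin d) × EuclideanSpace ℝ (Fin n) =>
      quadForm Γ (g q.1 q.2) * π q.1 q.2)) :
    (∫ q : EuclideanSpace ℝ (Fin d) × EuclideanSpace ℝ (Fin n),
        π q.1 q.2 * Real.log (π q.1 q.2 / (πX q.1 * πY q.2))) ≤
      κ / 2 * ∫ q : EuclideanSpace ℝ (Fin d) × EuclideanSpace ℝ (Fin n),
        quadForm Γ (g q.1 q.2) * π q.1 q.2 := by
  classical
  -- measurability of πY
  have mπY : Measurable πY := by
    have h1 : StronglyMeasurable fun y => ∫ x, π x y :=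
      StronglyMeasurable.integral_prod_left hπmeas.stronglyMeasurable
    have h2 : πY = fun y => ∫ x, π x y := funext hπY
    rw [h2]; exact h1.measurable
  have πYnn : ∀ y, 0 ≤ πY y := fun y => by
    rw [hπY y]; exact integral_nonneg fun x => (hπpos x y).le
  -- joint integrability
  have hπint : Integrable (fun q : EuclideanSpace ℝ (Fin d) × EuclideanSpace ℝ (Fin n) =>
      π q.1 q.2) volume := by
    by_contra hc
    rw [integral_undef hc] at hπprob
    norm_num at hπprob
  rw [Measure.volume_eq_prod] at hπint hMIint hRHSint ⊢
  -- πY is a.e. positive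
  have hYpos : ∀ᵐ y : EuclideanSpace ℝ (Fin n), 0 < πY y := by
    filter_upwards [hπint.prod_left_ae] with y hy
    rw [hπY y]
    exact integral_pos_of_pos_of_integrable (fun x => hπpos x y) hy
  -- the weighted measure
  set μY := volume.withDensity fun y => ENNReal.ofReal (πY y) with hμY
  have keyI : ∀ f : EuclideanSpace ℝ (Fin n) → ℝ,
      (∫ y, f y ∂μY) = ∫ y, f y * πY y := by
    intro f
    have h0 : (fun y => ENNReal.ofReal (πY y)) =
        fun y => ((Real.toNNReal (πY y) : NNReal) : ENNReal) := rfl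
    rw [hμY, h0, integral_withDensity_eq_integral_smul mπY.real_toNNReal f]
    congr 1
    funext y
    simp [NNReal.smul_def, Real.coe_toNNReal _ (πYnn y), mul_comm]
  have mπY' : Measurable fun y => ENNReal.ofReal (πY y) := mπY.ennreal_ofReal
  have keyInt : ∀ f : EuclideanSpace ℝ (Fin n) → ℝ,
      Integrable f μY ↔ Integrable (fun y => f y * πY y) volume := by
    intro f
    rw [hμY, integrable_withDensity_iff mπY' (Filter.Eventually.of_forall
      fun y => ENNReal.ofReal_lt_top)]
    have h1 : (fun y => f y * (ENNReal.ofReal (πY y)).toReal) = fun y => f y * πY y :=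
      funext fun y => by rw [ENNReal.toReal_ofReal (πYnn y)]
    rw [h1]
  -- Fubini on both sides
  rw [integral_prod _ hMIint, integral_prod _ hRHSint, ← integral_const_mul]
  refine integral_mono_ae hMIint.integral_prod_left
    ((hRHSint.integral_prod_left).const_mul _) ?_
  filter_upwards [hπint.prod_right_ae, hMIint.prod_right_ae, hRHSint.prod_right_ae]
    with x P1 P2 P3
  -- Slice argument for fixed x
  have hπXpos : 0 < πX x := by
    rw [hπX x]; exact integral_pos_of_pos_of_integrable (fun y => hπpos x y) P1
  set L : EuclideanSpace ℝ (Fin n) → ℝ := fun y => Real.log (π x y / πY y) with hLdef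
  set h : EuclideanSpace ℝ (Fin n) → ℝ := fun y => Real.exp (2⁻¹ * L y) with hhdef
  -- derivative facts
  have hd : ∀ y, HasFDerivAt h
      (Real.exp (2⁻¹ * L y) • ((2⁻¹ : ℝ) •
        InnerProductSpace.toDual ℝ (EuclideanSpace ℝ (Fin n)) (g x y))) y := by
    intro y
    exact (Real.hasDerivAt_exp (2⁻¹ * L y)).comp_hasFDerivAt y
      (((hg x y).hasFDerivAt).const_mul (2⁻¹ : ℝ))
  have hgradh : ∀ y, HasGradientAt h ((Real.exp (2⁻¹ * L y) * 2⁻¹) • g x y) y := by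
    intro y
    rw [hasGradientAt_iff_hasFDerivAt]
    convert hd y using 1
    · rfl
    · rfl
    rw [smul_smul]
    simp
  have hgradh' : ∀ y, gradient h y = (Real.exp (2⁻¹ * L y) * 2⁻¹) • g x y :=
    fun y => (hgradh y).gradient
  -- smoothness
  have hLC1 : ContDiff ℝ 1 L := by
    rw [contDiff_one_iff_fderiv]
    constructor
    · exact fun y => ((hg x y).hasFDerivAt).differentiableAt
    · have h1 : fderiv ℝ L =
          fun y => InnerProductSpace.toDual ℝ (EuclideanSpace ℝ (Fin n)) (g x y) :=
        funext fun y => ((hg x y).hasFDerivAt).fderiv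
      rw [h1]
      exact (InnerProductSpace.toDual ℝ (EuclideanSpace ℝ (Fin n))).continuous.comp (hgcont x)
  have hC1 : ContDiff ℝ 1 h :=
    (Real.contDiff_exp.of_le le_top).comp (contDiff_const.mul hLC1)
  -- pointwise identities where πY y > 0
  have hsq : ∀ y, h y ^ 2 = Real.exp (L y) := by
    intro y
    show Real.exp (2⁻¹ * L y) ^ 2 = Real.exp (L y)
    rw [pow_two, ← Real.exp_add]
    congr 1
    ring
  have e1 : ∀ y, 0 < πY y → h y ^ 2 = π x y / πY y := by
    intro y hy
    rw [hsq y]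
    show Real.exp (Real.log (π x y / πY y)) = _
    exact Real.exp_log (div_pos (hπpos x y) hy)
  have e2 : ∀ y, 0 < πY y → h y ^ 2 * πY y = π x y := by
    intro y hy
    rw [e1 y hy, div_mul_cancel₀ _ hy.ne']
  -- integrability hypotheses for the LSI
  have I2 : Integrable (fun y => h y ^ 2) μY := by
    rw [keyInt]
    refine P1.congr ?_
    filter_upwards [hYpos] with y hy
    exact (e2 y hy).symm
  have I1 : Integrable (fun y => h y ^ 2 * Real.log (h y ^ 2)) μY := by
    rw [keyInt]
    refine (P2.add (P1.mul_const (Real.log (πX x)))).congr ?_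
    filter_upwards [hYpos] with y hy
    have hsplit : π x y / πY y = π x y / (πX x * πY y) * πX x := by
      field_simp [hπXpos.ne', hy.ne']
    have hlog : Real.log (π x y / πY y) =
        Real.log (π x y / (πX x * πY y)) + Real.log (πX x) := by
      rw [hsplit, Real.log_mul (div_pos (hπpos x y) (mul_pos hπXpos hy)).ne' hπXpos.ne']
    calc π x y * Real.log (π x y / (πX x * πY y)) + π x y * Real.log (πX x)
        = π x y * Real.log (π x y / πY y) := by rw [hlog]; ring
      _ = (h y ^ 2 * πY y) * Real.log (h y ^ 2) := by
          rw [e2 y hy, e1 y hy]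
      _ = h y ^ 2 * Real.log (h y ^ 2) * πY y := by ring
  have I3 : Integrable (fun y => quadForm Γ (gradient h y)) μY := by
    rw [keyInt]
    refine ((P3.const_mul (4⁻¹ : ℝ))).congr ?_
    filter_upwards [hYpos] with y hy
    have hq : quadForm Γ (gradient h y) = (Real.exp (2⁻¹ * L y) * 2⁻¹) ^ 2
        * quadForm Γ (g x y) := by
      rw [hgradh' y, quadForm_smul]
    have hexp : Real.exp (2⁻¹ * L y) ^ 2 = π x y / πY y := e1 y hy
    calc (4 : ℝ)⁻¹ * (quadForm Γ (g x y) * π x y)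
        = (Real.exp (2⁻¹ * L y) * 2⁻¹) ^ 2 * quadForm Γ (g x y) * πY y := by
          rw [mul_pow, hexp]
          field_simp
          ring
      _ = quadForm Γ (gradient h y) * πY y := by rw [hq]
  -- apply the log-Sobolev inequality
  have final := hLSI h hC1 I1 I2 I3
  -- identify the entropy side
  have hinner : (∫ y, h y ^ 2 ∂μY) = πX x := by
    rw [keyI]
    rw [hπX x]
    refine integral_congr_ae ?_
    filter_upwards [hYpos] with y hy
    exact e2 y hy
  have hEntEq : entFun μY (fun y => h y ^ 2) =
      ∫ y, π x y * Real.log (π x y / (πX x * πY y)) := by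
    unfold entFun
    simp only [hinner]
    rw [keyI]
    refine integral_congr_ae ?_
    filter_upwards [hYpos] with y hy
    calc h y ^ 2 * Real.log (h y ^ 2 / πX x) * πY y
        = (h y ^ 2 * πY y) * Real.log (h y ^ 2 / πX x) := by ring
      _ = π x y * Real.log (π x y / (πX x * πY y)) := by
          rw [e2 y hy, e1 y hy, div_div, mul_comm (πY y) (πX x)]
  -- identify the energy side
  have hQuadEq : (∫ y, quadForm Γ (gradient h y) ∂μY) =
      4⁻¹ * ∫ y, quadForm Γ (g x y) * π x y := by
    rw [keyI, ← integral_const_mul]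
    refine integral_congr_ae ?_
    filter_upwards [hYpos] with y hy
    have hq : quadForm Γ (gradient h y) = (Real.exp (2⁻¹ * L y) * 2⁻¹) ^ 2
        * quadForm Γ (g x y) := by
      rw [hgradh' y, quadForm_smul]
    have hexp : Real.exp (2⁻¹ * L y) ^ 2 = π x y / πY y := e1 y hy
    rw [hq, mul_pow, hexp]
    field_simp
    ring
  rw [hEntEq, hQuadEq] at final
  calc (∫ y, π x y * Real.log (π x y / (πX x * πY y)))
      ≤ 2 * κ * (4⁻¹ * ∫ y, quadForm Γ (g x y) * π x y) := final
    _ = κ / 2 * ∫ y, quadForm Γ (g x y) * π x y := by ring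
end

section
/- Let Σ be a symmetric positive definite matrix whose index set is partitioned into three disjoint nonempty sets A, {i}, B. Then the Schur complements satisfy Σ_{B|A∪{i}} ⪯ Σ_{B|A} in the Loewner order; equivalently, Σ_{B|A} − Σ_{B|A∪{i}} is positive semidefinite. -/
open Matrix

/-- A principal submatrix (along an injective map) of a positive definite matrix is
positive definite. -/
lemma Matrix.PosDef.submatrix_injective {n m : Type*} [Fintype n] [Fintype m]
    [DecidableEq n] {M : Matrix n n ℝ} (hM : M.PosDef) {e : m → n}
    (he : Function.Injective e) : (M.submatrix e e).PosDef := by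
  refine Matrix.PosDef.of_dotProduct_mulVec_pos ?_ ?_
  · have := hM.isHermitian
    unfold Matrix.IsHermitian at *
    rw [conjTranspose_submatrix, this]
  · intro x hx
    set B : Matrix n m ℝ := (1 : Matrix n n ℝ).submatrix id e with hB
    have hsub : M.submatrix e e = Bᴴ * M * B := by
      rw [(by simp : M = 1 * M * 1), Matrix.submatrix_mul (he₂ := Function.bijective_id),
        Matrix.submatrix_mul (he₂ := Function.bijective_id), Matrix.submatrix_id_id]
      simp [hB, Matrix.conjTranspose_submatrix]
    have key2 : star x ⬝ᵥ ((Bᴴ * M * B) *ᵥ x) = star (B *ᵥ x) ⬝ᵥ (M *ᵥ (B *ᵥ x)) := by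
      rw [← Matrix.mulVec_mulVec, ← Matrix.mulVec_mulVec, Matrix.dotProduct_mulVec,
        Matrix.star_mulVec, ← Matrix.dotProduct_mulVec]
    have hBx : B *ᵥ x ≠ 0 := by
      intro h0
      apply hx
      funext i
      have : (B *ᵥ x) (e i) = x i := by
        simp only [hB, Matrix.mulVec, Matrix.one_apply, Matrix.submatrix_apply, id_eq,
          dotProduct, ite_mul, one_mul, zero_mul]
        rw [Finset.sum_eq_single i (fun b _ hb => by
          rw [if_neg (fun h => hb ((he h).symm))]) (by simp), if_pos rfl]
      rw [h0] at this
      simpa using this.symm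
    rw [hsub, key2]
    exact hM.dotProduct_mulVec_pos hBx

/-- **Monotonicity of Schur complements under extra conditioning.** For a symmetric positive
definite matrix `M` whose index set is partitioned into `A` (type `α`), `{i}` (type `Unit`),
and `B` (type `β`), the Schur complements satisfy `Σ_{B|A∪{i}} ⪯ Σ_{B|A}` in the Loewner
order, i.e. `Σ_{B|A} - Σ_{B|A∪{i}}` is positive semidefinite. -/
theorem schur_complement_loewner_mono
    {α β : Type*} [Fintype α] [Fintype β] [DecidableEq α] [DecidableEq β]
    [Nonempty α] [Nonempty β]
    (M : Matrix (α ⊕ (Unit ⊕ β)) (α ⊕ (Unit ⊕ β)) ℝ)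
    (hM : M.IsSymm) (hMpd : M.PosDef)
    -- embeddings of the index blocks `A`, `B`, and `A ∪ {i}`
    (eA : α → α ⊕ (Unit ⊕ β)) (heA : eA = Sum.inl)
    (eB : β → α ⊕ (Unit ⊕ β)) (heB : eB = fun b => Sum.inr (Sum.inr b))
    (eAi : α ⊕ Unit → α ⊕ (Unit ⊕ β))
    (heAi : eAi = Sum.elim Sum.inl (fun u => Sum.inr (Sum.inl u))) :
    ((M.submatrix eB eB -
        M.submatrix eB eA * (M.submatrix eA eA)⁻¹ * M.submatrix eA eB) -
      (M.submatrix eB eB -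
        M.submatrix eB eAi * (M.submatrix eAi eAi)⁻¹ * M.submatrix eAi eB)).PosSemidef := by
  subst heA heB heAi
  set A : Matrix α α ℝ := M.submatrix Sum.inl Sum.inl with hA
  set b : Matrix α Unit ℝ := M.submatrix Sum.inl (fun u => Sum.inr (Sum.inl u)) with hb
  set d : Matrix Unit Unit ℝ :=
    M.submatrix (fun u : Unit => Sum.inr (Sum.inl u)) (fun u => Sum.inr (Sum.inl u)) with hd
  set u : Matrix β α ℝ := M.submatrix (fun j => Sum.inr (Sum.inr j)) Sum.inl with hu
  set v : Matrix β Unit ℝ :=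
    M.submatrix (fun j => Sum.inr (Sum.inr j)) (fun t => Sum.inr (Sum.inl t)) with hv
  -- symmetry facts
  have hAsym : Aᵀ = A := by ext i j; exact hM.apply _ _
  have h1 : M.submatrix Sum.inl (fun j : β => Sum.inr (Sum.inr j)) = uᵀ := by
    ext i j; exact (hM.apply _ _).symm
  have h2 : M.submatrix (fun t : Unit => Sum.inr (Sum.inl t)) Sum.inl = bᵀ := by
    ext i j; exact (hM.apply _ _).symm
  have h3 : M.submatrix (fun t : Unit => Sum.inr (Sum.inl t))
      (fun j : β => Sum.inr (Sum.inr j)) = vᵀ := by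
    ext i j; exact (hM.apply _ _).symm
  -- block decompositions
  have hAi : M.submatrix (Sum.elim Sum.inl (fun u => Sum.inr (Sum.inl u)))
      (Sum.elim Sum.inl (fun u => Sum.inr (Sum.inl u))) = fromBlocks A b bᵀ d := by
    ext (i | i) (j | j) <;>
      simp [fromBlocks, hA, hb, hd, ← h2] <;> exact hM.apply _ _
  have hBAi : M.submatrix (fun j : β => Sum.inr (Sum.inr j))
      (Sum.elim Sum.inl (fun u => Sum.inr (Sum.inl u))) = fromCols u v := by
    ext i (j | j) <;> simp [fromCols, hu, hv]
  have hAiB : M.submatrix (Sum.elim Sum.inl (fun u => Sum.inr (Sum.inl u)))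
      (fun j : β => Sum.inr (Sum.inr j)) = fromRows uᵀ vᵀ := by
    ext (i | i) j <;> simp [fromRows_apply_inl, fromRows_apply_inr, ← h1, ← h3]
  -- positive definiteness of principal blocks
  have hApd : A.PosDef := hMpd.submatrix_injective Sum.inl_injective
  have hAipd : (fromBlocks A b bᵀ d).PosDef := by
    rw [← hAi]
    refine hMpd.submatrix_injective ?_
    intro x y hxy
    cases x <;> cases y <;> simp_all
  haveI iA : Invertible A := hApd.isUnit.invertible
  haveI iF : Invertible (fromBlocks A b bᵀ d) := hAipd.isUnit.invertible
  haveI iS' : Invertible (d - bᵀ * ⅟A * b) := invertibleOfFromBlocks₁₁Invertible A b bᵀ d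
  have hinvA : ⅟A = A⁻¹ := invOf_eq_nonsing_inv A
  have hs' : d - bᵀ * ⅟A * b = d - bᵀ * A⁻¹ * b := by rw [hinvA]
  haveI iS : Invertible (d - bᵀ * A⁻¹ * b) := hs' ▸ iS'
  set s : Matrix Unit Unit ℝ := d - bᵀ * A⁻¹ * b with hs
  -- s is positive semidefinite, hence so is s⁻¹
  have hbH : bᴴ = bᵀ := conjTranspose_eq_transpose_of_trivial b
  have hsPSD : s.PosSemidef := by
    have := (Matrix.PosDef.fromBlocks₁₁ b d hApd).mp (by rw [hbH]; exact hAipd.posSemidef)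
    rwa [hbH] at this
  have hsInv : s⁻¹.PosSemidef := hsPSD.inv
  -- inverse of the block matrix
  have hFinv : (fromBlocks A b bᵀ d)⁻¹ =
      fromBlocks (A⁻¹ + A⁻¹ * b * s⁻¹ * bᵀ * A⁻¹) (-(A⁻¹ * b * s⁻¹))
        (-(s⁻¹ * bᵀ * A⁻¹)) s⁻¹ := by
    rw [← invOf_eq_nonsing_inv (fromBlocks A b bᵀ d), invOf_fromBlocks₁₁_eq]
    simp only [invOf_eq_nonsing_inv, hs, Matrix.mul_assoc]
  -- the key algebraic identity
  set w : Matrix β Unit ℝ := u * A⁻¹ * b - v with hw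
  have hAinvT : (A⁻¹)ᵀ = A⁻¹ := by rw [Matrix.transpose_nonsing_inv, hAsym]
  have hwT : wᵀ = bᵀ * A⁻¹ * uᵀ - vᵀ := by
    rw [hw, Matrix.transpose_sub, Matrix.transpose_mul, Matrix.transpose_mul, hAinvT,
      Matrix.mul_assoc]
  clear_value A b d u v s w
  have key : (M.submatrix (fun j : β => Sum.inr (Sum.inr j)) (fun j => Sum.inr (Sum.inr j)) -
        u * A⁻¹ * uᵀ) -
      (M.submatrix (fun j : β => Sum.inr (Sum.inr j)) (fun j => Sum.inr (Sum.inr j)) -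
        fromCols u v * (fromBlocks A b bᵀ d)⁻¹ * fromRows uᵀ vᵀ) = w * s⁻¹ * wᵀ := by
    rw [hFinv, fromCols_mul_fromBlocks, fromCols_mul_fromRows, hwT, hw]
    simp only [Matrix.sub_mul, Matrix.mul_sub, Matrix.add_mul, Matrix.mul_add,
      Matrix.neg_mul, Matrix.mul_neg, Matrix.mul_assoc]
    abel
  rw [h1, hAi, hBAi, hAiB, key]
  have hwH : wᴴ = wᵀ := conjTranspose_eq_transpose_of_trivial w
  have := hsInv.mul_mul_conjTranspose_same w
  rwa [hwH] at this
end
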